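/- Conservation of nonholonomic momenta: let d₁,d₂,d₃ : [0,T] → R^3 be a non-twisting orthonormal frame (d_i' = w × d_i with w = d₃ × d₃'), and let π_perp(t) = Π¹(t) d₁(t) + Π²(t) d₂(t) be a tangent vector field along d₃ satisfying the parallel-transport equation (I − d₃⊗d₃) π_perp' = 0. Then Π¹ and Π² are constant. -/

import Mathlib

open Matrix

def cross3 (v w : Fin 3 → ℝ) : Fin 3 → ℝ :=
  ![v 1 * w 2 - v 2 * w 1, v 2 * w 0 - v 0 * w 2, v 0 * w 1 - v 1 * w 0]

lemma triple_prod (a b c : Fin 3 → ℝ) :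
    cross3 (cross3 a b) c = (a ⬝ᵥ c) • b - (b ⬝ᵥ c) • a := by
  funext i
  fin_cases i <;>
    simp [cross3, dotProduct, Fin.sum_univ_three] <;> ring

lemma hasDerivAt_dot {f g : ℝ → Fin 3 → ℝ} {f' g' : Fin 3 → ℝ} {t : ℝ}
    (hf : HasDerivAt f f' t) (hg : HasDerivAt g g' t) :
    HasDerivAt (fun t => f t ⬝ᵥ g t) (f' ⬝ᵥ g t + f t ⬝ᵥ g') t := by
  have hfi := fun i => hasDerivAt_pi.mp hf i
  have hgi := fun i => hasDerivAt_pi.mp hg i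
  simp only [dotProduct, Fin.sum_univ_three]
  have := (((hfi 0).mul (hgi 0)).add ((hfi 1).mul (hgi 1))).add ((hfi 2).mul (hgi 2))
  convert this using 1
  · rfl
  · rfl
  · rfl
  · ring

theorem nonholonomic_momenta_conservation
    (d₁ d₂ d₃ : ℝ → Fin 3 → ℝ)
    (hdiff₁ : Differentiable ℝ d₁) (hdiff₂ : Differentiable ℝ d₂)
    (hdiff₃ : Differentiable ℝ d₃)
    (horth : ∀ t, d₁ t ⬝ᵥ d₁ t = 1 ∧ d₂ t ⬝ᵥ d₂ t = 1 ∧ d₃ t ⬝ᵥ d₃ t = 1 ∧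
      d₁ t ⬝ᵥ d₂ t = 0 ∧ d₁ t ⬝ᵥ d₃ t = 0 ∧ d₂ t ⬝ᵥ d₃ t = 0)
    (hω : ∀ t, deriv d₁ t = cross3 (cross3 (d₃ t) (deriv d₃ t)) (d₁ t) ∧
      deriv d₂ t = cross3 (cross3 (d₃ t) (deriv d₃ t)) (d₂ t) ∧
      deriv d₃ t = cross3 (cross3 (d₃ t) (deriv d₃ t)) (d₃ t))
    (P₁ P₂ : ℝ → ℝ) (hP₁ : Differentiable ℝ P₁) (hP₂ : Differentiable ℝ P₂)
    (πperp : ℝ → Fin 3 → ℝ)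
    (hπ : ∀ t, πperp t = P₁ t • d₁ t + P₂ t • d₂ t)
    (hpt : ∀ t, deriv πperp t - (deriv πperp t ⬝ᵥ d₃ t) • d₃ t = 0) :
    (∀ t s, P₁ t = P₁ s) ∧ (∀ t s, P₂ t = P₂ s) := by
  have hπdiff : Differentiable ℝ πperp := by
    have : πperp = fun t => P₁ t • d₁ t + P₂ t • d₂ t := funext hπ
    rw [this]
    exact (hP₁.smul hdiff₁).add (hP₂.smul hdiff₂)
  -- π ⬝ d₃ = 0
  have hπd₃ : ∀ t, πperp t ⬝ᵥ d₃ t = 0 := by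
    intro t
    obtain ⟨_, _, _, _, h13, h23⟩ := horth t
    rw [hπ t, add_dotProduct, smul_dotProduct, smul_dotProduct, h13, h23]
    simp
  -- deriv πperp t ⬝ᵥ d_i = 0 for i = 1,2
  have hdπ : ∀ t (v : Fin 3 → ℝ), v ⬝ᵥ d₃ t = 0 → deriv πperp t ⬝ᵥ v = 0 := by
    intro t v hv
    have h := sub_eq_zero.mp (hpt t)
    rw [h, smul_dotProduct, dotProduct_comm (d₃ t) v, hv, smul_zero]
  -- main: for any e differentiable with e'= ω × e, d₃⬝e = 0, the dot is constant
  have key : ∀ (e : ℝ → Fin 3 → ℝ), Differentiable ℝ e →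
      (∀ t, deriv e t = cross3 (cross3 (d₃ t) (deriv d₃ t)) (e t)) →
      (∀ t, e t ⬝ᵥ d₃ t = 0) →
      ∀ t s, (fun t => πperp t ⬝ᵥ e t) t = (fun t => πperp t ⬝ᵥ e t) s := by
    intro e hde hωe hed₃
    apply is_const_of_deriv_eq_zero
    · exact fun t =>
        (hasDerivAt_dot (hπdiff t).hasDerivAt (hde t).hasDerivAt).differentiableAt
    · intro t
      have H : HasDerivAt (fun t => πperp t ⬝ᵥ e t)
          (deriv πperp t ⬝ᵥ e t + πperp t ⬝ᵥ deriv e t) t :=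
        hasDerivAt_dot (hπdiff t).hasDerivAt (hde t).hasDerivAt
      rw [H.deriv]
      have h1 : deriv πperp t ⬝ᵥ e t = 0 := hdπ t _ (hed₃ t)
      have h2 : πperp t ⬝ᵥ deriv e t = 0 := by
        rw [hωe t, triple_prod, dotProduct_sub, dotProduct_smul, dotProduct_smul,
          dotProduct_comm (d₃ t) (e t), hed₃ t, hπd₃ t]
        simp
      rw [h1, h2, add_zero]
  constructor
  · have hed₃ : ∀ t, d₁ t ⬝ᵥ d₃ t = 0 := fun t => (horth t).2.2.2.2.1
    have hc := key d₁ hdiff₁ (fun t => (hω t).1) hed₃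
    intro t s
    have hPeq : ∀ u, P₁ u = πperp u ⬝ᵥ d₁ u := by
      intro u
      obtain ⟨h11, _, _, h12, _, _⟩ := horth u
      rw [hπ u, add_dotProduct, smul_dotProduct, smul_dotProduct, h11,
        dotProduct_comm (d₂ u) (d₁ u), h12]
      simp
    rw [hPeq t, hPeq s]; exact hc t s
  · have hed₃ : ∀ t, d₂ t ⬝ᵥ d₃ t = 0 := fun t => (horth t).2.2.2.2.2
    have hc := key d₂ hdiff₂ (fun t => (hω t).2.1) hed₃
    intro t s
    have hPeq : ∀ u, P₂ u = πperp u ⬝ᵥ d₂ u := by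
      intro u
      obtain ⟨_, h22, _, h12, _, _⟩ := horth u
      rw [hπ u, add_dotProduct, smul_dotProduct, smul_dotProduct, h22, h12]
      simp
    rw [hPeq t, hPeq s]; exact hc t s
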